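/- In a directed graph G with source s, sink t, and a strongly connected component C not containing s or t: if C has an entrance u and an exit v, then any path Q inside C from u to v is useful, i.e., Q extends to a simple s,t-path in G. -/

import Mathlib

/-!
Directed graphs are modelled by an arc relation `A : V → V → Prop`.
A simple directed path is a `List V` that is `Chain' A`, has no repeated
vertices, and has prescribed first and last vertices.
-/

variable {V : Type*}

/-- `l` is a simple directed path from `s` to `t` in the digraph with arcs `A`. -/
def IsPathFrom (A : V → V → Prop) (s t : V) (l : List V) : Prop :=
  l.Chain' A ∧ l.Nodup ∧ l.head? = some s ∧ l.getLast? = some t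

/-- The arc `(u,v)` is useful w.r.t. `s,t`: some simple `s,t`-path contains it
(i.e. `u,v` appear consecutively on the path). -/
def ArcUseful (A : V → V → Prop) (s t u v : V) : Prop :=
  ∃ l : List V, IsPathFrom A s t l ∧ [u, v] <:+: l

/-- The path `P` is useful w.r.t. `s,t`: some simple `s,t`-path contains it
as a (consecutive) subpath. -/
def PathUseful (A : V → V → Prop) (s t : V) (P : List V) : Prop :=
  ∃ l : List V, IsPathFrom A s t l ∧ P <:+: l

/-- A set of vertices is strongly connected: any two of its vertices are joined
by a directed path staying inside the set. -/
def StronglyConnected (A : V → V → Prop) (C : Set V) : Prop :=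
  ∀ u ∈ C, ∀ v ∈ C, Relation.ReflTransGen (fun a b => A a b ∧ a ∈ C ∧ b ∈ C) u v

/-- `C` is a strongly connected component: a maximal strongly connected set. -/
def IsSCC (A : V → V → Prop) (C : Set V) : Prop :=
  StronglyConnected A C ∧ ∀ D : Set V, StronglyConnected A D → C ⊆ D → D = C

/-- `u` is an entrance of `C`: there is a simple `s,u`-path meeting `C` only at `u`. -/
def IsEntrance (A : V → V → Prop) (s : V) (C : Set V) (u : V) : Prop :=
  u ∈ C ∧ ∃ l : List V, IsPathFrom A s u l ∧ ∀ x ∈ l, x ∈ C → x = u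

/-- `v` is an exit of `C`: there is a simple `v,t`-path meeting `C` only at `v`. -/
def IsExit (A : V → V → Prop) (t : V) (C : Set V) (v : V) : Prop :=
  v ∈ C ∧ ∃ l : List V, IsPathFrom A v t l ∧ ∀ x ∈ l, x ∈ C → x = v

private lemma chain_rtg {A : V → V → Prop} {D : Set V} :
    ∀ (l : List V) (a b : V), l.Chain' A → l.head? = some a → l.getLast? = some b →
      (∀ x ∈ l, x ∈ D) → Relation.ReflTransGen (fun p q => A p q ∧ p ∈ D ∧ q ∈ D) a b
  | [], a, b, _, ha, _, _ => by simp at ha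
  | [x], a, b, _, ha, hb, _ => by
      simp only [List.head?_cons, Option.some.injEq] at ha
      simp only [List.getLast?_singleton, Option.some.injEq] at hb
      subst ha; subst hb; exact .refl
  | x :: y :: l, a, b, hc, ha, hb, hD => by
      simp only [List.head?_cons, Option.some.injEq] at ha
      subst ha
      rw [show ∀ l : List V, List.Chain' A l ↔ List.IsChain A l from fun _ => Iff.rfl, List.isChain_cons_cons] at hc
      refine Relation.ReflTransGen.head ⟨hc.1, hD x (by simp), hD y (by simp)⟩ ?_
      exact chain_rtg (y :: l) y b hc.2 rfl (by simpa using hb)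
        (fun z hz => hD z (List.mem_cons_of_mem _ hz))

private lemma mem_to_last {A : V → V → Prop} {D : Set V} {l : List V} {x b : V}
    (hc : l.Chain' A) (hb : l.getLast? = some b) (hx : x ∈ l)
    (hD : ∀ y ∈ l, y ∈ D) :
    Relation.ReflTransGen (fun p q => A p q ∧ p ∈ D ∧ q ∈ D) x b := by
  obtain ⟨l₁, l₂, rfl⟩ := List.append_of_mem hx
  rw [List.getLast?_append_of_ne_nil _ (by simp)] at hb
  exact chain_rtg (x :: l₂) x b (hc.suffix ⟨l₁, rfl⟩) rfl hb
    (fun y hy => hD y (List.mem_append_right _ hy))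

private lemma head_to_mem {A : V → V → Prop} {D : Set V} {l : List V} {a x : V}
    (hc : l.Chain' A) (ha : l.head? = some a) (hx : x ∈ l)
    (hD : ∀ y ∈ l, y ∈ D) :
    Relation.ReflTransGen (fun p q => A p q ∧ p ∈ D ∧ q ∈ D) a x := by
  obtain ⟨l₁, l₂, rfl⟩ := List.append_of_mem hx
  have hpre : (l₁ ++ [x]) <+: (l₁ ++ x :: l₂) := ⟨l₂, by simp⟩
  rw [List.head?_append] at ha
  exact chain_rtg (l₁ ++ [x]) a x (hc.prefix hpre) (by rw [List.head?_append]; simpa using ha)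
    (by rw [List.getLast?_append_of_ne_nil _ (by simp)]; rfl)
    (fun y hy => hD y (hpre.subset hy))

private lemma inter_sub_C {A : V → V → Prop} {s t : V} {C : Set V}
    (hSC : ∀ u ∈ C, ∀ v ∈ C, Relation.ReflTransGen (fun a b => A a b ∧ a ∈ C ∧ b ∈ C) u v)
    (hmax : ∀ D : Set V, (∀ u ∈ D, ∀ v ∈ D,
        Relation.ReflTransGen (fun a b => A a b ∧ a ∈ D ∧ b ∈ D) u v) → C ⊆ D → D = C)
    {u v : V} (huC : u ∈ C) (hvC : v ∈ C)
    {P1 : List V} (hP1 : IsPathFrom A s u P1)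
    {P2 : List V} (hP2 : IsPathFrom A v t P2)
    {w : V} (hw1 : w ∈ P1) (hw2 : w ∈ P2) : w ∈ C := by
  by_contra hwC
  obtain ⟨a₁, b₁, rfl⟩ := List.append_of_mem hw1
  obtain ⟨a₂, b₂, rfl⟩ := List.append_of_mem hw2
  set suf : List V := w :: b₁ with hsufdef
  set pre : List V := a₂ ++ [w] with hpredef
  set D : Set V := C ∪ {x | x ∈ suf} ∪ {x | x ∈ pre} with hDdef
  have hCD : C ⊆ D := fun x hx => Or.inl (Or.inl hx)
  have hsufD : ∀ y ∈ suf, y ∈ D := fun y hy => Or.inl (Or.inr hy)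
  have hpreD : ∀ y ∈ pre, y ∈ D := fun y hy => Or.inr hy
  have hsufc : suf.Chain' A := hP1.1.suffix ⟨a₁, rfl⟩
  have hsufl : suf.getLast? = some u := by
    have := hP1.2.2.2
    rwa [List.getLast?_append_of_ne_nil _ (by simp)] at this
  have hprec : pre.Chain' A := hP2.1.prefix ⟨b₂, by rw [hpredef]; simp⟩
  have hpreh : pre.head? = some v := by
    have := hP2.2.2.1
    rw [List.head?_append] at this
    rw [List.head?_append]
    simpa using this
  have hprel : pre.getLast? = some w := by
    rw [List.getLast?_append_of_ne_nil _ (by simp)]; rfl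
  have hwsuf : w ∈ suf := by simp [hsufdef]
  have hwpre : w ∈ pre := List.mem_append_right _ (by simp)
  -- reach u from anything in D
  have reach_u : ∀ a ∈ D, Relation.ReflTransGen (fun p q => A p q ∧ p ∈ D ∧ q ∈ D) a u := by
    rintro a ((ha | ha) | ha)
    · exact Relation.ReflTransGen.mono (fun p q ⟨h1, h2, h3⟩ => ⟨h1, hCD h2, hCD h3⟩) _ _ (hSC a ha u huC)
    · exact mem_to_last hsufc hsufl ha hsufD
    · exact (mem_to_last hprec hprel ha hpreD).trans (mem_to_last hsufc hsufl hwsuf hsufD)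
  have from_v : ∀ b ∈ D, Relation.ReflTransGen (fun p q => A p q ∧ p ∈ D ∧ q ∈ D) v b := by
    rintro b ((hb | hb) | hb)
    · exact Relation.ReflTransGen.mono (fun p q ⟨h1, h2, h3⟩ => ⟨h1, hCD h2, hCD h3⟩) _ _ (hSC v hvC b hb)
    · exact (head_to_mem hprec hpreh hwpre hpreD).trans (head_to_mem hsufc rfl hb hsufD)
    · exact head_to_mem hprec hpreh hb hpreD
  have hDsc : ∀ a ∈ D, ∀ b ∈ D, Relation.ReflTransGen (fun p q => A p q ∧ p ∈ D ∧ q ∈ D) a b := by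
    intro a ha b hb
    exact ((reach_u a ha).trans
      ((Relation.ReflTransGen.mono (fun p q ⟨h1, h2, h3⟩ => ⟨h1, hCD h2, hCD h3⟩) _ _ (hSC u huC v hvC)))).trans
      (from_v b hb)
  have := hmax D hDsc hCD
  exact hwC (this ▸ hsufD w hwsuf)


/-- if `C` is a strongly connected component avoiding `s,t` with an
entrance `u` and an exit `v`, then any simple `u,v`-path `Q` lying inside `C`
is useful, i.e. extends to a simple `s,t`-path. -/
theorem path_inside_component_between_entrance_and_exit_is_useful
    (A : V → V → Prop) (s t : V) (C : Set V)
    (hC : IsSCC A C) (hs : s ∉ C) (ht : t ∉ C)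
    (u v : V) (hu : IsEntrance A s C u) (hv : IsExit A t C v)
    (Q : List V) (hQ : IsPathFrom A u v Q) (hQC : ∀ x ∈ Q, x ∈ C) :
    PathUseful A s t Q := by
  obtain ⟨huC, P1, ⟨hc1, hn1, hh1, hl1⟩, hP1C⟩ := hu
  obtain ⟨hvC, P2, ⟨hc2, hn2, hh2, hl2⟩, hP2C⟩ := hv
  obtain ⟨hQc, hQn, hQh, hQl⟩ := hQ
  have hQne : Q ≠ [] := fun h => by simp [h] at hQh
  have hP1ne : P1 ≠ [] := fun h => by simp [h] at hh1
  have hP2ne : P2 ≠ [] := fun h => by simp [h] at hh2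
  have hsplit1 : P1.dropLast ++ [u] = P1 := List.dropLast_append_getLast? u hl1
  have hsplit2 : v :: P2.tail = P2 := (List.eq_cons_of_mem_head? hh2).symm
  have hd1ne : P1.dropLast ≠ [] := by
    intro h
    rw [← hsplit1, h] at hh1
    simp only [List.nil_append, List.head?_cons, Option.some.injEq] at hh1
    exact hs (hh1 ▸ huC)
  have ht2ne : P2.tail ≠ [] := by
    intro h
    rw [← hsplit2, h] at hl2
    simp only [List.getLast?_singleton, Option.some.injEq] at hl2
    exact ht (hl2 ▸ hvC)
  have hu_not_dl : u ∉ P1.dropLast := by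
    intro h
    have hnd := hn1
    rw [← hsplit1, List.nodup_append] at hnd
    exact hnd.2.2 u h u (by simp) rfl
  have hv_not_tl : v ∉ P2.tail := by
    intro h
    have hnd := hn2
    rw [← hsplit2, List.nodup_cons] at hnd
    exact hnd.1 h
  have hdl_nC : ∀ x ∈ P1.dropLast, x ∉ C := fun x hx hxC =>
    hu_not_dl ((hP1C x ((List.dropLast_sublist _).subset hx) hxC) ▸ hx)
  have htl_nC : ∀ x ∈ P2.tail, x ∉ C := fun x hx hxC =>
    hv_not_tl ((hP2C x ((List.tail_sublist _).subset hx) hxC) ▸ hx)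
  have hdisj : ∀ x ∈ P1.dropLast, x ∉ P2.tail := fun x hx hx2 =>
    hdl_nC x hx (inter_sub_C hC.1 hC.2 huC hvC ⟨hc1, hn1, hh1, hl1⟩ ⟨hc2, hn2, hh2, hl2⟩
      ((List.dropLast_sublist _).subset hx) ((List.tail_sublist _).subset hx2))
  refine ⟨P1.dropLast ++ Q ++ P2.tail, ⟨?_, ?_, ?_, ?_⟩, P1.dropLast, P2.tail, rfl⟩
  · rw [show ∀ l : List V, List.Chain' A l ↔ List.IsChain A l from fun _ => Iff.rfl, List.isChain_append]
    refine ⟨?_, hc2.tail, ?_⟩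
    · rw [List.isChain_append]
      refine ⟨hc1.prefix (List.dropLast_prefix _), hQc, ?_⟩
      intro x hx y hy
      rw [hQh] at hy
      rw [Option.mem_some_iff] at hy
      subst hy
      have hcc := hc1
      rw [← hsplit1, show ∀ l : List V, List.Chain' A l ↔ List.IsChain A l from fun _ => Iff.rfl, List.isChain_append] at hcc
      exact hcc.2.2 x hx u (by simp)
    · intro x hx y hy
      rw [List.getLast?_append_of_ne_nil _ hQne, hQl] at hx
      rw [Option.mem_some_iff] at hx
      subst hx
      have hcc := hc2
      rw [← hsplit2, show ∀ l : List V, List.Chain' A l ↔ List.IsChain A l from fun _ => Iff.rfl, List.isChain_cons] at hcc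
      exact hcc.1 y hy
  · rw [List.nodup_append, List.nodup_append]
    refine ⟨⟨(List.dropLast_sublist _).nodup hn1, hQn, fun x hx y hy hxy => hdl_nC x hx (by rw [hxy]; exact hQC y hy)⟩,
      (List.tail_sublist _).nodup hn2, fun x hx y hxt hxy => ?_⟩
    subst hxy
    rcases List.mem_append.mp hx with h | h
    · exact hdisj x h hxt
    · exact htl_nC x hxt (hQC x h)
  · rw [List.head?_append_of_ne_nil _ (fun h => hd1ne (List.append_eq_nil_iff.mp h).1),
      List.head?_append_of_ne_nil _ hd1ne]
    rw [← hsplit1, List.head?_append_of_ne_nil _ hd1ne] at hh1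
    exact hh1
  · rw [List.getLast?_append_of_ne_nil _ ht2ne]
    rw [← hsplit2, show v :: P2.tail = [v] ++ P2.tail from rfl,
      List.getLast?_append_of_ne_nil _ ht2ne] at hl2
    exact hl2
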